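/- The 2-form ω = 𝒱_{abc}(ξ) dξ^a ∧ dρ^{bc}, where 𝒱_{a₁…a_k}(ξ) = (1/(n−k)!) ε_{a₁…a_k b₁…b_{n−k}} ξ^{b₁}⋯ξ^{b_{n−k}}, is closed: dω = 0. -/

import Mathlib

open scoped BigOperators

/-- The Levi-Civita symbol `ε_{g(0) … g(n-1)}`: the sign of `g` if `g` is a
permutation of `Fin n`, and `0` otherwise. -/
noncomputable def eps {n : ℕ} (g : Fin n → Fin n) : ℝ :=
  ∑ σ : Equiv.Perm (Fin n),
    if (σ : Fin n → Fin n) = g then ((Equiv.Perm.sign σ : ℤ) : ℝ) else 0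

/-- The index tuple `(a, b, c, f 0, …, f (n-4))` as a function `Fin n → Fin n`. -/
def cat3 {n : ℕ} (a b c : Fin n) (f : Fin (n - 3) → Fin n) : Fin n → Fin n :=
  fun i =>
    if i.val = 0 then a
    else if i.val = 1 then b
    else if i.val = 2 then c
    else if h : i.val - 3 < n - 3 then f ⟨i.val - 3, h⟩ else a

/-- `𝒱_{abc}(ξ) = (1/(n-3)!) ε_{abc b₁…b_{n-3}} ξ^{b₁} ⋯ ξ^{b_{n-3}}`. -/
noncomputable def Vthree {n : ℕ} {A : Type*} [Ring A] [Algebra ℝ A]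
    (ξ : Fin n → A) (a b c : Fin n) : A :=
  ((Nat.factorial (n - 3) : ℝ))⁻¹ •
    ∑ f : Fin (n - 3) → Fin n,
      eps (cat3 a b c f) • (List.ofFn fun j => ξ (f j)).prod

lemma eps_eq_zero_of_eq {n : ℕ} (g : Fin n → Fin n) {i k : Fin n} (hik : i ≠ k)
    (h : g i = g k) : eps g = 0 := by
  unfold eps
  refine Finset.sum_eq_zero fun σ _ => ?_
  rw [if_neg]
  intro hσ
  apply hik
  apply σ.injective
  rw [show (σ : Fin n → Fin n) i = g i from congrFun hσ i,
      show (σ : Fin n → Fin n) k = g k from congrFun hσ k, h]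

lemma eps_comp_swap {n : ℕ} (g : Fin n → Fin n) {i k : Fin n} (hik : i ≠ k) :
    eps (g ∘ Equiv.swap i k) = - eps g := by
  unfold eps
  rw [← Finset.sum_neg_distrib]
  refine Fintype.sum_equiv (Equiv.mulRight (Equiv.swap i k)) _ _ fun σ => ?_
  simp only [Equiv.coe_mulRight]
  have h1 : ((σ * Equiv.swap i k : Equiv.Perm (Fin n)) : Fin n → Fin n)
      = (σ : Fin n → Fin n) ∘ (Equiv.swap i k : Fin n → Fin n) := rfl
  have h2 : ((σ : Fin n → Fin n) = g ∘ (Equiv.swap i k : Fin n → Fin n))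
      ↔ ((σ : Fin n → Fin n) ∘ (Equiv.swap i k : Fin n → Fin n) = g) := by
    constructor
    · intro h
      funext x
      have := congrFun h (Equiv.swap i k x)
      simpa [Equiv.swap_apply_self] using this
    · intro h
      funext x
      have := congrFun h (Equiv.swap i k x)
      simpa [Equiv.swap_apply_self] using this
  simp only [h1]
  by_cases hc : (σ : Fin n → Fin n) ∘ (Equiv.swap i k : Fin n → Fin n) = g
  · rw [if_pos (h2.mpr hc), if_pos hc]
    rw [Equiv.Perm.sign_mul, Equiv.Perm.sign_swap hik]
    push_cast
    ring
  · rw [if_neg (fun h => hc (h2.mp h)), if_neg hc, neg_zero]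

section cat3lemmas

variable {n : ℕ} (a b c : Fin n) (f : Fin (n - 3) → Fin n)

lemma cat3_val0 {i : Fin n} (h : i.val = 0) : cat3 a b c f i = a := by
  simp [cat3, h]

lemma cat3_val1 {i : Fin n} (h : i.val = 1) : cat3 a b c f i = b := by
  simp [cat3, h]

lemma cat3_val2 {i : Fin n} (h : i.val = 2) : cat3 a b c f i = c := by
  simp [cat3, h]

lemma cat3_val3 {i : Fin n} (h : 3 ≤ i.val) :
    cat3 a b c f i = f ⟨i.val - 3, by have := i.isLt; omega⟩ := by
  simp only [cat3]
  rw [if_neg (by omega), if_neg (by omega), if_neg (by omega),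
    dif_pos (by have := i.isLt; omega)]

lemma cat3_update_swap (hn : 3 ≤ n) (j : Fin (n - 3)) (a' : Fin n) :
    cat3 (f j) b c (Function.update f j a')
      = cat3 a' b c f ∘ Equiv.swap (⟨0, by omega⟩ : Fin n)
          (⟨j.val + 3, by have := j.isLt; omega⟩ : Fin n) := by
  have hj := j.isLt
  funext i
  by_cases h0 : i = (⟨0, by omega⟩ : Fin n)
  · rw [h0, Function.comp_apply, Equiv.swap_apply_left,
      cat3_val0 (f j) b c (Function.update f j a') rfl,
      cat3_val3 a' b c f (by simp)]
    exact congrArg f (Fin.ext (by simp))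
  · by_cases hk : i = (⟨j.val + 3, by omega⟩ : Fin n)
    · rw [hk, Function.comp_apply, Equiv.swap_apply_right,
        cat3_val0 a' b c f rfl,
        cat3_val3 (f j) b c (Function.update f j a') (by simp),
        Function.update_apply, if_pos (by simp [Fin.ext_iff])]
    · rw [Function.comp_apply, Equiv.swap_apply_of_ne_of_ne h0 hk]
      by_cases h1 : i.val = 1
      · rw [cat3_val1 _ _ _ _ h1, cat3_val1 _ _ _ _ h1]
      · by_cases h2 : i.val = 2
        · rw [cat3_val2 _ _ _ _ h2, cat3_val2 _ _ _ _ h2]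
        · have h3 : 3 ≤ i.val := by
            have hi0 : i.val ≠ 0 := fun h => h0 (Fin.ext h)
            omega
          rw [cat3_val3 _ _ _ _ h3, cat3_val3 _ _ _ _ h3, Function.update_apply,
            if_neg]
          intro h
          apply hk
          have hval : i.val - 3 = j.val := congrArg Fin.val h
          exact Fin.ext (by simp only []; omega)

lemma cat3_not_inj (hn : 3 ≤ n) (j : Fin (n - 3)) (h : f j = a) :
    ∃ i k : Fin n, i ≠ k ∧ cat3 a b c f i = cat3 a b c f k := by
  have hj := j.isLt
  refine ⟨⟨0, by omega⟩, ⟨j.val + 3, by omega⟩, ?_, ?_⟩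
  · intro h'
    have := congrArg Fin.val h'
    simp at this
  · rw [cat3_val0 a b c f rfl, cat3_val3 a b c f (by simp), ← h]
    exact congrArg f (Fin.ext (by simp))

end cat3lemmas

section prods
variable {n : ℕ} {A : Type*} [Ring A] [Algebra ℝ A]

def Pprod (ξ : Fin n → A) {m : ℕ} (f : Fin m → Fin n) : A :=
  (List.ofFn fun j => ξ (f j)).prod

def Qprod (ξ : Fin n → A) {m : ℕ} (f : Fin m → Fin n) (j : Fin m) : A :=
  (List.ofFn fun i => if i = j then 1 else ξ (f i)).prod

lemma Qprod_update (ξ : Fin n → A) {m : ℕ} (f : Fin m → Fin n) (j : Fin m) (a : Fin n) :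
    Qprod ξ (Function.update f j a) j = Qprod ξ f j := by
  unfold Qprod
  congr 1
  congr 1
  funext i
  by_cases h : i = j
  · simp [h]
  · simp [h, Function.update_apply]

lemma d_Pprod_mul (ξ Dξ : Fin n → A) (d : A →ₗ[ℝ] A)
    (hdLξ : ∀ a x, d (ξ a * x) = Dξ a * x - ξ a * d x)
    (hDξc : ∀ a (x : A), Dξ a * x = x * Dξ a) :
    ∀ (m : ℕ) (f : Fin m → Fin n) (x : A), d x = 0 →
      d (Pprod ξ f * x)
        = ∑ j : Fin m, ((-1 : ℝ) ^ (j : ℕ)) • (Dξ (f j) * (Qprod ξ f j * x)) := by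
  intro m
  induction m with
  | zero =>
    intro f x hx
    simp [Pprod, hx]
  | succ m ih =>
    intro f x hx
    have hP : Pprod ξ f = ξ (f 0) * Pprod ξ (fun i : Fin m => f i.succ) := by
      simp [Pprod, List.ofFn_succ]
    have hQ0 : Qprod ξ f 0 = Pprod ξ (fun i : Fin m => f i.succ) := by
      simp [Qprod, Pprod, List.ofFn_succ, Fin.succ_ne_zero]
    have hQs : ∀ j : Fin m,
        Qprod ξ f j.succ = ξ (f 0) * Qprod ξ (fun i : Fin m => f i.succ) j := by
      intro j
      have h0 : ((0 : Fin (m+1)) = j.succ) = False := by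
        simp [eq_comm, Fin.succ_ne_zero]
      simp [Qprod, List.ofFn_succ, h0, Fin.succ_inj]
    have hcomm : ∀ (c : Fin n) (y : A), ξ (f 0) * (Dξ c * y) = Dξ c * (ξ (f 0) * y) := by
      intro c y
      rw [hDξc c y, ← mul_assoc, ← hDξc]
    rw [hP, mul_assoc, hdLξ, ih _ x hx, Fin.sum_univ_succ, hQ0, Fin.val_zero,
      pow_zero, one_smul, Finset.mul_sum, sub_eq_add_neg, ← Finset.sum_neg_distrib]
    congr 1
    refine Finset.sum_congr rfl fun j _ => ?_
    rw [mul_smul_comm, hcomm, ← neg_smul, hQs j, Fin.val_succ, pow_succ, mul_assoc]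
    congr 1
    ring

end prods

/-- the 2-form `ω = 𝒱_{abc}(ξ) dξ^a ∧ dρ^{bc}` on the graded
manifold with odd coordinates `ξ^a`, `ρ^{ab} = -ρ^{ba}` is closed: `dω = 0`.
Here the de Rham complex is modelled by any `ℝ`-algebra `A` generated by the odd
coordinates `ξ, ρ` and their (even, hence central) differentials `Dξ, Dρ`, and
`d` is the odd derivation with `d ξ = Dξ`, `d ρ = Dρ`, `d Dξ = 0 = d Dρ`. -/
theorem presymplectic_form_closed
    (n : ℕ) (hn : 3 ≤ n) (A : Type*) [Ring A] [Algebra ℝ A]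
    (ξ : Fin n → A) (ρ : Fin n → Fin n → A)
    (Dξ : Fin n → A) (Dρ : Fin n → Fin n → A)
    (hρa : ∀ a b, ρ a b = - ρ b a)
    (hDρa : ∀ a b, Dρ a b = - Dρ b a)
    (hξξ : ∀ a b, ξ a * ξ b = - (ξ b * ξ a))
    (hξρ : ∀ a b c, ξ a * ρ b c = - (ρ b c * ξ a))
    (hρρ : ∀ a b c d, ρ a b * ρ c d = - (ρ c d * ρ a b))
    (hDξc : ∀ a x, Dξ a * x = x * Dξ a)
    (hDρc : ∀ a b x, Dρ a b * x = x * Dρ a b)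
    (d : A →ₗ[ℝ] A)
    (hdξ : ∀ a, d (ξ a) = Dξ a)
    (hdρ : ∀ a b, d (ρ a b) = Dρ a b)
    (hdDξ : ∀ a, d (Dξ a) = 0)
    (hdDρ : ∀ a b, d (Dρ a b) = 0)
    (hdLξ : ∀ a x, d (ξ a * x) = Dξ a * x - ξ a * d x)
    (hdLρ : ∀ a b x, d (ρ a b * x) = Dρ a b * x - ρ a b * d x)
    (hdLDξ : ∀ a x, d (Dξ a * x) = Dξ a * d x)
    (hdLDρ : ∀ a b x, d (Dρ a b * x) = Dρ a b * d x) :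
    d (∑ a, ∑ b, ∑ c, Vthree ξ a b c * (Dξ a * Dρ b c)) = 0 := by
  
  classical
  set c1 : ℝ := ((Nat.factorial (n - 3) : ℝ))⁻¹ with hc1
  have hx0 : ∀ a b c, d (Dξ a * Dρ b c) = 0 := by
    intro a b c
    rw [hdLDξ, hdDρ, mul_zero]
  have hswapD : ∀ u v (y z : A),
      Dξ u * (y * (Dξ v * z)) = Dξ v * (y * (Dξ u * z)) := by
    intro u v y z
    rw [hDξc u (y * (Dξ v * z)), hDξc v (y * (Dξ u * z)), hDξc v z, hDξc u z,
      ← mul_assoc y z (Dξ v), ← mul_assoc y z (Dξ u),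
      mul_assoc (y * z) (Dξ v) (Dξ u), mul_assoc (y * z) (Dξ u) (Dξ v),
      hDξc v (Dξ u)]
  -- the generic summand
  set G : (Fin n × Fin n × Fin n × (Fin (n - 3) → Fin n) × Fin (n - 3)) → A :=
    fun p =>
      (c1 * eps (cat3 p.1 p.2.1 p.2.2.1 p.2.2.2.1) * (-1) ^ ((p.2.2.2.2 : Fin (n - 3)) : ℕ)) •
        (Dξ (p.2.2.2.1 p.2.2.2.2) *
          (Qprod ξ p.2.2.2.1 p.2.2.2.2 * (Dξ p.1 * Dρ p.2.1 p.2.2.1))) with hG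
  have main : ∀ a b c : Fin n,
      d (Vthree ξ a b c * (Dξ a * Dρ b c))
        = ∑ f : Fin (n - 3) → Fin n, ∑ j : Fin (n - 3), G (a, b, c, f, j) := by
    intro a b c
    simp only [Vthree, hG]
    rw [smul_mul_assoc, Finset.sum_mul, map_smul, map_sum, Finset.smul_sum]
    refine Finset.sum_congr rfl fun f _ => ?_
    rw [smul_mul_assoc, map_smul,
      show (List.ofFn fun j => ξ (f j)).prod = Pprod ξ f from rfl,
      d_Pprod_mul ξ Dξ d hdLξ hDξc _ f _ (hx0 a b c),
      Finset.smul_sum, Finset.smul_sum]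
    refine Finset.sum_congr rfl fun j _ => ?_
    rw [smul_smul, smul_smul, mul_assoc]
  calc d (∑ a, ∑ b, ∑ c, Vthree ξ a b c * (Dξ a * Dρ b c))
      = ∑ a, ∑ b, ∑ c, d (Vthree ξ a b c * (Dξ a * Dρ b c)) := by
        rw [map_sum]
        refine Finset.sum_congr rfl fun a _ => ?_
        rw [map_sum]
        refine Finset.sum_congr rfl fun b _ => ?_
        rw [map_sum]
    _ = ∑ a, ∑ b, ∑ c, ∑ f : Fin (n - 3) → Fin n, ∑ j : Fin (n - 3),
          G (a, b, c, f, j) := by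
        refine Finset.sum_congr rfl fun a _ => Finset.sum_congr rfl fun b _ =>
          Finset.sum_congr rfl fun c _ => main a b c
    _ = ∑ p : Fin n × Fin n × Fin n × (Fin (n - 3) → Fin n) × Fin (n - 3), G p := by
        simp only [Fintype.sum_prod_type]
    _ = 0 := by
        refine Finset.sum_ninvolution
          (fun p => (p.2.2.2.1 p.2.2.2.2, p.2.1, p.2.2.1,
            Function.update p.2.2.2.1 p.2.2.2.2 p.1, p.2.2.2.2)) ?_ ?_
          (fun p => Finset.mem_univ _) ?_
        · rintro ⟨a, b, c, f, j⟩
          have hj := j.isLt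
          have hne : (⟨0, by omega⟩ : Fin n) ≠ ⟨j.val + 3, by omega⟩ := by
            intro h
            have := congrArg Fin.val h
            simp at this
          simp only [hG]
          rw [Function.update_self, Qprod_update,
            cat3_update_swap b c f hn j a, eps_comp_swap _ hne,
            hswapD a (f j) (Qprod ξ f j) (Dρ b c), ← add_smul]
          convert zero_smul ℝ _ using 2
          ring
        · rintro ⟨a, b, c, f, j⟩ hne heq
          apply hne
          have hfj : f j = a := congrArg Prod.fst heq
          obtain ⟨i, k, hik, hval⟩ := cat3_not_inj a b c f hn j hfj
          simp only [hG]
          rw [eps_eq_zero_of_eq _ hik hval, mul_zero, zero_mul, zero_smul]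
        · rintro ⟨a, b, c, f, j⟩
          simp only [Function.update_self, Function.update_idem,
            Function.update_eq_self]
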